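/- arXiv:2209.13854 — 6 statements merged into one kernel-verified Lean document; each statement's English description precedes it below -/
import Mathlib

section
/- For every complex number z, |cos(|z|)| ≤ |cos(z)| ≤ cosh(|z|). -/
open Real Complex

/-- Key identity: `|cos z|² = cos² x + sinh² y` where `z = x + i y`. -/
lemma sq_abs_complex_cos (z : ℂ) :
    ‖Complex.cos z‖ ^ 2 = Real.cos z.re ^ 2 + Real.sinh z.im ^ 2 := by
  rw [Complex.sq_norm, Complex.normSq_apply, Complex.cos_eq, ← Complex.ofReal_cos,
    ← Complex.ofReal_sin, ← Complex.ofReal_cosh, ← Complex.ofReal_sinh]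
  simp only [Complex.sub_re, Complex.sub_im, Complex.mul_re, Complex.mul_im,
    Complex.ofReal_re, Complex.ofReal_im, Complex.I_re, Complex.I_im]
  have h1 := Real.sin_sq_add_cos_sq z.re
  have h2 := Real.cosh_sq z.im
  nlinarith [h1, h2]

/-- For every complex number `z`, `|cos(|z|)| ≤ |cos z| ≤ cosh(|z|)`. -/
theorem abs_cos_le_abs_complex_cos_le_cosh (z : ℂ) :
    |Real.cos ‖z‖| ≤ ‖Complex.cos z‖ ∧
      ‖Complex.cos z‖ ≤ Real.cosh ‖z‖ := by
  set r := ‖z‖ with hr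
  set x := z.re
  set y := z.im
  have hr0 : 0 ≤ r := norm_nonneg z
  have hxr : |x| ≤ r := Complex.abs_re_le_norm z
  have hyr : |y| ≤ r := Complex.abs_im_le_norm z
  have hxy : x ^ 2 + y ^ 2 = r ^ 2 := by
    rw [hr, Complex.sq_norm, Complex.normSq_apply]; ring
  have hkey := sq_abs_complex_cos z
  have hsinh_y : Real.sinh y ^ 2 ≤ Real.sinh r ^ 2 := by
    have h1 : |Real.sinh y| ≤ Real.sinh r := by
      rw [Real.abs_sinh]; exact Real.sinh_le_sinh.mpr hyr
    nlinarith [abs_nonneg (Real.sinh y), _root_.sq_abs (Real.sinh y)]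
  constructor
  · -- lower bound
    have ha : |x| ≤ r := hxr
    have key : Real.cos r ^ 2 ≤ Real.cos x ^ 2 + Real.sinh y ^ 2 := by
      have hcx : Real.cos x ^ 2 = Real.cos |x| ^ 2 := by
        rcases abs_choice x with h | h <;> rw [h] <;> simp [Real.cos_neg]
      set a := |x| with hadef
      have ha0 : 0 ≤ a := abs_nonneg x
      have hdiff : Real.cos r ^ 2 - Real.cos a ^ 2
          = -(Real.sin (r + a) * Real.sin (r - a)) := by
        have := Real.cos_sub_cos (2 * r) (2 * a)
        rw [Real.cos_sq r, Real.cos_sq a]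
        have e1 : (2 * r + 2 * a) / 2 = r + a := by ring
        have e2 : (2 * r - 2 * a) / 2 = r - a := by ring
        rw [e1, e2] at this
        linarith
      have hy2 : (r + a) * (r - a) = y ^ 2 := by
        have : a ^ 2 = x ^ 2 := sq_abs x
        nlinarith
      have hb : -(Real.sin (r + a) * Real.sin (r - a)) ≤ y ^ 2 := by
        have u1 : |Real.sin (r + a)| ≤ 1 := Real.abs_sin_le_one _
        have u2 : |Real.sin (r + a)| ≤ r + a := by
          calc |Real.sin (r + a)| ≤ |r + a| := Real.abs_sin_le_abs
            _ = r + a := abs_of_nonneg (by linarith)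
        have v1 : |Real.sin (r - a)| ≤ r - a := by
          calc |Real.sin (r - a)| ≤ |r - a| := Real.abs_sin_le_abs
            _ = r - a := abs_of_nonneg (by linarith)
        have v0 : 0 ≤ |Real.sin (r - a)| := abs_nonneg _
        have u0 : 0 ≤ |Real.sin (r + a)| := abs_nonneg _
        have hprod : -(Real.sin (r + a) * Real.sin (r - a))
            ≤ |Real.sin (r + a)| * |Real.sin (r - a)| := by
          rw [← abs_mul]; exact neg_le_abs _
        rcases le_total (r + a) 1 with h | h
        · nlinarith
        · nlinarith
      have hsy : y ^ 2 ≤ Real.sinh y ^ 2 := by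
        have : |y| ≤ Real.sinh |y| := Real.self_le_sinh_iff.mpr (abs_nonneg y)
        nlinarith [_root_.sq_abs y, Real.abs_sinh y, abs_nonneg y, abs_nonneg (Real.sinh y),
          _root_.sq_abs (Real.sinh y)]
      rw [hcx]
      linarith
    have hsq2 : |Real.cos r| ^ 2 ≤ ‖Complex.cos z‖ ^ 2 := by
      rw [_root_.sq_abs]; linarith
    nlinarith [abs_nonneg (Real.cos r), norm_nonneg (Complex.cos z)]
  · -- upper bound
    have hcos : Real.cos x ^ 2 ≤ 1 := Real.cos_sq_le_one x
    have hsq : ‖Complex.cos z‖ ^ 2 ≤ Real.cosh r ^ 2 := by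
      rw [hkey, Real.cosh_sq]
      linarith
    have h1 : 0 ≤ Real.cosh r := (Real.cosh_pos r).le
    nlinarith [norm_nonneg (Complex.cos z)]
end

section
/- For real σ > 1 and τ, and σ' with σ' = σ, we have |Γ(σ + iτ)|² ≥ Γ(σ)² · |π τ / sin(π i τ)|, i.e. |Γ(σ+iτ)|² ≥ Γ(σ)² · (π τ / sinh(π τ)) for τ ≠ 0 (and trivially equality at τ = 0). -/
open Real Complex Filter Finset Topology


open Real Complex Filter Finset

lemma gammaSeq_abs_sq (s τ : ℝ) (hs : 0 < s) (n : ℕ) (hn : n ≠ 0) :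
    ‖Complex.GammaSeq ((s:ℂ) + τ * Complex.I) n‖ ^ 2 =
      Real.GammaSeq s n ^ 2
        * ∏ j ∈ Finset.range (n+1), ((s+j)^2 / ((s+j)^2 + τ^2)) := by
  have hn' : (0:ℝ) < n := by positivity
  have hterm : ∀ j : ℕ, (0:ℝ) < s + j := fun j => by positivity
  have hQ : (0:ℝ) < ∏ j ∈ Finset.range (n+1), (s + j) :=
    Finset.prod_pos fun j _ => hterm j
  have hP : (0:ℝ) < ∏ j ∈ Finset.range (n+1), ((s+j)^2 + τ^2) :=
    Finset.prod_pos fun j _ => by positivity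
  have habs : ∀ j : ℕ,
      ‖(s:ℂ) + (τ:ℂ) * Complex.I + (j:ℕ)‖ ^ 2 = (s+j)^2 + τ^2 := by
    intro j
    rw [Complex.sq_norm]
    have : (s:ℂ) + (τ:ℂ) * Complex.I + (j:ℕ) = ((s + j : ℝ) : ℂ) + (τ:ℝ) * Complex.I := by
      push_cast; ring
    rw [this, Complex.normSq_add_mul_I]
  have hcpow : ‖(n:ℂ) ^ ((s:ℂ) + (τ:ℂ) * Complex.I)‖ = (n:ℝ) ^ s := by
    have : ((n:ℕ):ℂ) = ((n:ℝ):ℂ) := by push_cast; ring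
    rw [this, Complex.norm_cpow_eq_rpow_re_of_pos hn']
    simp
  rw [Complex.GammaSeq, Real.GammaSeq]
  rw [norm_div, norm_mul, hcpow, norm_prod]
  rw [div_pow, mul_pow, ← Finset.prod_pow]
  simp_rw [habs]
  rw [Complex.norm_natCast, Finset.prod_div_distrib, Finset.prod_pow, div_pow, mul_pow]
  field_simp

open Real Complex Filter Finset

lemma abs_Gamma_one_add (τ : ℝ) (hτ : τ ≠ 0) :
    ‖Complex.Gamma (1 + τ * Complex.I)‖ ^ 2
      = Real.pi * τ / Real.sinh (Real.pi * τ) := by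
  have hne : (τ : ℂ) * Complex.I ≠ 0 := by
    simp [Complex.ext_iff, hτ]
  have hsh : Real.sinh (Real.pi * τ) ≠ 0 := by
    rw [Real.sinh_ne_zero]
    exact mul_ne_zero Real.pi_ne_zero hτ
  have h1 : Complex.Gamma ((τ:ℂ) * Complex.I + 1)
      = (τ:ℂ) * Complex.I * Complex.Gamma ((τ:ℂ) * Complex.I) :=
    Complex.Gamma_add_one _ hne
  have href := Complex.Gamma_mul_Gamma_one_sub ((τ:ℂ) * Complex.I)
  have hsin : Complex.sin (↑Real.pi * ((τ:ℂ) * Complex.I))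
      = (Real.sinh (Real.pi * τ) : ℂ) * Complex.I := by
    rw [← mul_assoc, ← Complex.ofReal_mul, Complex.sin_mul_I, Complex.ofReal_sinh]
  have hconj : Complex.Gamma (1 - (τ:ℂ) * Complex.I)
      = (starRingEnd ℂ) (Complex.Gamma (1 + (τ:ℂ) * Complex.I)) := by
    rw [← Complex.Gamma_conj]
    congr 1
    simp [Complex.ext_iff]
  have key : Complex.Gamma (1 + (τ:ℂ) * Complex.I)
        * (starRingEnd ℂ) (Complex.Gamma (1 + (τ:ℂ) * Complex.I))
      = ((Real.pi * τ / Real.sinh (Real.pi * τ) : ℝ) : ℂ) := by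
    rw [← hconj, add_comm (1:ℂ), h1, mul_assoc, mul_comm ((τ:ℂ)*Complex.I),
      ← mul_assoc, href, hsin]
    rw [Complex.ofReal_div, Complex.ofReal_mul]
    field_simp
  have := Complex.mul_conj (Complex.Gamma (1 + (τ:ℂ) * Complex.I))
  rw [key] at this
  rw [← Complex.sq_norm] at this
  exact_mod_cast congrArg Complex.re this.symm


/-- For real `σ > 1` and `τ ≠ 0`,
`|Γ(σ + iτ)|² ≥ Γ(σ)² · (πτ / sinh(πτ))`
(the right-hand side being `Γ(σ)² · |πτ / sin(πiτ)|`). -/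
theorem abs_Gamma_sq_ge (σ τ : ℝ) (hσ : 1 < σ) (hτ : τ ≠ 0) :
    Real.Gamma σ ^ 2 * (Real.pi * τ / Real.sinh (Real.pi * τ)) ≤
      ‖Complex.Gamma (σ + τ * Complex.I)‖ ^ 2 := by
  have hσ0 : (0:ℝ) < σ := by linarith
  -- per-n inequality
  have hmain : ∀ n : ℕ, n ≠ 0 →
      Real.GammaSeq σ n ^ 2 * ‖Complex.GammaSeq (((1:ℝ):ℂ) + τ * Complex.I) n‖ ^ 2
        ≤ ‖Complex.GammaSeq ((σ:ℂ) + τ * Complex.I) n‖ ^ 2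
            * Real.GammaSeq 1 n ^ 2 := by
    intro n hn
    rw [gammaSeq_abs_sq σ τ hσ0 n hn, gammaSeq_abs_sq 1 τ one_pos n hn]
    have hprodle :
        (∏ j ∈ Finset.range (n+1), ((1+(j:ℝ))^2 / ((1+(j:ℝ))^2 + τ^2)))
          ≤ ∏ j ∈ Finset.range (n+1), ((σ+(j:ℝ))^2 / ((σ+(j:ℝ))^2 + τ^2)) := by
      apply Finset.prod_le_prod
      · intro j _; positivity
      · intro j _
        have h1 : (0:ℝ) < (1+(j:ℝ))^2 + τ^2 := by positivity
        have h2 : (0:ℝ) < (σ+(j:ℝ))^2 + τ^2 := by positivity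
        rw [div_le_div_iff₀ h1 h2]
        have hsq : (1+(j:ℝ))^2 ≤ (σ+(j:ℝ))^2 :=
          pow_le_pow_left₀ (by positivity) (by linarith) 2
        nlinarith [mul_nonneg (sq_nonneg τ) (sub_nonneg.mpr hsq)]
    calc Real.GammaSeq σ n ^ 2
          * (Real.GammaSeq 1 n ^ 2 * ∏ j ∈ Finset.range (n+1), ((1+(j:ℝ))^2 / ((1+(j:ℝ))^2 + τ^2)))
        ≤ Real.GammaSeq σ n ^ 2
          * (Real.GammaSeq 1 n ^ 2 * ∏ j ∈ Finset.range (n+1), ((σ+(j:ℝ))^2 / ((σ+(j:ℝ))^2 + τ^2))) := by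
          apply mul_le_mul_of_nonneg_left _ (sq_nonneg _)
          exact mul_le_mul_of_nonneg_left hprodle (sq_nonneg _)
      _ = Real.GammaSeq σ n ^ 2 * (∏ j ∈ Finset.range (n+1), ((σ+(j:ℝ))^2 / ((σ+(j:ℝ))^2 + τ^2)))
            * Real.GammaSeq 1 n ^ 2 := by ring
  -- limits
  have habsT : ∀ z : ℂ, Tendsto (fun n => ‖Complex.GammaSeq z n‖ ^ 2) atTop
      (𝓝 (‖Complex.Gamma z‖ ^ 2)) := fun z =>
    (((continuous_norm.tendsto _).comp (Complex.GammaSeq_tendsto_Gamma z)).pow 2)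
  have hL : Tendsto (fun n => Real.GammaSeq σ n ^ 2
        * ‖Complex.GammaSeq (((1:ℝ):ℂ) + τ * Complex.I) n‖ ^ 2) atTop
      (𝓝 (Real.Gamma σ ^ 2 * ‖Complex.Gamma (((1:ℝ):ℂ) + τ * Complex.I)‖ ^ 2)) :=
    ((Real.GammaSeq_tendsto_Gamma σ).pow 2).mul (habsT _)
  have hR : Tendsto (fun n => ‖Complex.GammaSeq ((σ:ℂ) + τ * Complex.I) n‖ ^ 2
        * Real.GammaSeq 1 n ^ 2) atTop
      (𝓝 (‖Complex.Gamma ((σ:ℂ) + τ * Complex.I)‖ ^ 2 * Real.Gamma 1 ^ 2)) :=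
    (habsT _).mul ((Real.GammaSeq_tendsto_Gamma 1).pow 2)
  have hfin := le_of_tendsto_of_tendsto hL hR
    (eventually_atTop.mpr ⟨1, fun n hn => hmain n (by omega)⟩)
  rw [Real.Gamma_one, one_pow, mul_one] at hfin
  have h1 : ‖Complex.Gamma (((1:ℝ):ℂ) + τ * Complex.I)‖ ^ 2
      = Real.pi * τ / Real.sinh (Real.pi * τ) := by
    rw [show (((1:ℝ):ℂ) : ℂ) = (1:ℂ) by norm_num]
    exact abs_Gamma_one_add τ hτ
  rw [h1] at hfin
  exact hfin
end

section
/- For s = σ + iτ complex with σ < 0 and s not an integer, |Γ_ℂ(1-s)/Γ_ℂ(s)|^{1/2} ≥ ((2π)^{σ - 1/2} / √π) · Γ(1-σ) · tanh(π|τ|)^{1/2}, where Γ_ℂ(s) = 2(2π)^{-s} Γ(s). -/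
open Real Complex

/-- `Γ_ℝ(s) = π^{-s/2} Γ(s/2)`. -/
noncomputable def GammaR (s : ℂ) : ℂ := (Real.pi : ℂ) ^ (-s / 2) * Complex.Gamma (s / 2)

/-- `Γ_ℂ(s) = 2 (2π)^{-s} Γ(s)`. -/
noncomputable def GammaC (s : ℂ) : ℂ := 2 * (2 * Real.pi : ℂ) ^ (-s) * Complex.Gamma s

/-- `γ_ℝ(s) = |Γ_ℝ(1-s)/Γ_ℝ(s)|`. -/
noncomputable def gammaRFactor (s : ℂ) : ℝ := ‖GammaR (1 - s) / GammaR s‖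

/-- `γ_ℂ(s) = |Γ_ℂ(1-s)/Γ_ℂ(s)|^{1/2}`. -/
noncomputable def gammaCFactor (s : ℂ) : ℝ := Real.sqrt ‖GammaC (1 - s) / GammaC s‖

/-- `Γ_m(s) = min {γ_ℝ(s), γ_ℂ(s)}`. -/
noncomputable def GammaMin (s : ℂ) : ℝ := min (gammaRFactor s) (gammaCFactor s)

section Aux
open Filter Topology Finset

lemma sinh_le_abs_sin (x y : ℝ) :
    Real.sinh |y| ≤ ‖Complex.sin (x + y * Complex.I)‖ := by
  have h : Complex.sin (x + y * Complex.I)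
      = (Real.sin x * Real.cosh y : ℝ) + (Real.cos x * Real.sinh y : ℝ) * Complex.I := by
    rw [Complex.sin_add_mul_I]
    push_cast [← Complex.ofReal_sin, ← Complex.ofReal_cos, ← Complex.ofReal_cosh,
      ← Complex.ofReal_sinh]
    ring
  rw [h, Complex.norm_add_mul_I]
  rw [show Real.sinh |y| = Real.sqrt ((Real.sinh |y|)^2) from (Real.sqrt_sq (by positivity)).symm]
  apply Real.sqrt_le_sqrt
  have h1 := Real.sin_sq_add_cos_sq x
  have h2 := Real.cosh_sq y
  have h3 : Real.sinh |y| ^ 2 = Real.sinh y ^ 2 := by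
    rcases abs_choice y with h | h <;> rw [h] <;> simp [Real.sinh_neg]
  nlinarith [Real.sinh_sq y, sq_nonneg (Real.sin x * Real.sinh y)]

lemma abs_Gamma_half (τ : ℝ) :
    (‖Complex.Gamma (1/2 + τ * Complex.I)‖)^2 * Real.cosh (Real.pi * τ) = Real.pi := by
  have h := Complex.Gamma_mul_Gamma_one_sub (1/2 + τ * Complex.I)
  have hc : (1 : ℂ) - (1/2 + τ * Complex.I) = (starRingEnd ℂ) (1/2 + τ * Complex.I) := by
    simp [Complex.ext_iff]; norm_num
  rw [hc, Complex.Gamma_conj, Complex.mul_conj] at h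
  have hsin : Complex.sin (↑Real.pi * (1/2 + τ * Complex.I))
      = ((Real.cosh (Real.pi * τ) : ℝ) : ℂ) := by
    have h5 : (↑Real.pi * (1/2 + τ * Complex.I) : ℂ)
        = ((Real.pi/2 : ℝ) : ℂ) + ((Real.pi * τ : ℝ) : ℂ) * Complex.I := by push_cast; ring
    rw [h5, Complex.sin_add_mul_I, ← Complex.ofReal_sin, ← Complex.ofReal_cos,
      ← Complex.ofReal_cosh, ← Complex.ofReal_sinh, Real.sin_pi_div_two, Real.cos_pi_div_two]
    simp
  rw [hsin, ← Complex.ofReal_div] at h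
  have h4 : Complex.normSq (Complex.Gamma (1/2 + τ * Complex.I))
      = Real.pi / Real.cosh (Real.pi * τ) := by exact_mod_cast h
  rw [Complex.sq_norm, h4]
  field_simp

lemma abs_complex_GammaSeq (x τ : ℝ) (n : ℕ) (hn : n ≠ 0) :
    ‖Complex.GammaSeq (x + τ * Complex.I) n‖
      = (n:ℝ)^x * n.factorial / ∏ j ∈ Finset.range (n+1), Real.sqrt ((x+j)^2 + τ^2) := by
  have hn' : (0:ℝ) < n := by positivity
  rw [Complex.GammaSeq, norm_div, norm_mul, norm_prod]
  congr 1
  · congr 1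
    · rw [show ((n:ℂ)) = ((n:ℝ):ℂ) by push_cast; rfl,
        Complex.norm_cpow_eq_rpow_re_of_pos hn']
      simp
    · simp
  · apply Finset.prod_congr rfl
    intro j _
    rw [show (↑x + ↑τ*Complex.I + (j:ℕ) : ℂ) = ((x + j : ℝ):ℂ) + (τ:ℝ)*Complex.I by push_cast; ring,
      Complex.norm_add_mul_I]

lemma abs_Gamma_lower (σ τ : ℝ) (hσ : 1/2 ≤ σ) :
    Real.Gamma σ ≤ ‖Complex.Gamma (σ + τ * Complex.I)‖
      * Real.sqrt (Real.cosh (Real.pi * τ)) := by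
  have hσ0 : (0:ℝ) < σ := lt_of_lt_of_le (by norm_num) hσ
  -- per-n inequality
  have key : ∀ n : ℕ, 1 ≤ n →
      ‖Complex.GammaSeq ((1:ℂ)/2 + τ * Complex.I) n‖ * Real.GammaSeq σ n
        ≤ ‖Complex.GammaSeq (↑σ + τ * Complex.I) n‖ * Real.GammaSeq (1/2) n := by
    intro n hn
    have hn' : n ≠ 0 := by omega
    have hn0 : (0:ℝ) < n := by positivity
    have h12 : ((1:ℂ)/2) = ((1/2 : ℝ) : ℂ) := by push_cast; ring
    rw [h12, abs_complex_GammaSeq _ _ _ hn', abs_complex_GammaSeq _ _ _ hn',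
      Real.GammaSeq, Real.GammaSeq]
    set Qh := ∏ j ∈ Finset.range (n+1), Real.sqrt (((1:ℝ)/2+j)^2 + τ^2) with hQh
    set Qs := ∏ j ∈ Finset.range (n+1), Real.sqrt ((σ+j)^2 + τ^2) with hQs
    set Ph := ∏ j ∈ Finset.range (n+1), ((1:ℝ)/2+j) with hPh
    set Ps := ∏ j ∈ Finset.range (n+1), (σ+j) with hPs
    have hQhp : 0 < Qh := Finset.prod_pos (fun j _ => Real.sqrt_pos.2 (by positivity))
    have hQsp : 0 < Qs := Finset.prod_pos (fun j _ => Real.sqrt_pos.2 (by positivity))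
    have hPhp : 0 < Ph := Finset.prod_pos (fun j _ => by positivity)
    have hPsp : 0 < Ps := Finset.prod_pos (fun j _ => by positivity)
    have hprod : Qs * Ph ≤ Qh * Ps := by
      rw [← Finset.prod_mul_distrib, ← Finset.prod_mul_distrib]
      apply Finset.prod_le_prod
      · intro j _; positivity
      · intro j _
        have hb : (0:ℝ) < 1/2 + j := by positivity
        have hab : (1:ℝ)/2 + j ≤ σ + j := by linarith
        have e1 : Real.sqrt ((σ+j)^2 + τ^2) * (1/2+j)
            = Real.sqrt (((σ+j)^2 + τ^2) * (1/2+j)^2) := by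
          rw [Real.sqrt_mul (by positivity), Real.sqrt_sq hb.le]
        have e2 : Real.sqrt (((1:ℝ)/2+j)^2 + τ^2) * (σ+j)
            = Real.sqrt ((((1:ℝ)/2+j)^2 + τ^2) * (σ+j)^2) := by
          rw [Real.sqrt_mul (by positivity), Real.sqrt_sq (by positivity)]
        rw [e1, e2]
        apply Real.sqrt_le_sqrt
        nlinarith [mul_nonneg (mul_nonneg (sq_nonneg τ)
          (by linarith : (0:ℝ) ≤ (σ+j)+(1/2+j))) (by linarith : (0:ℝ) ≤ (σ+j)-(1/2+j))]
    have hnum : (0:ℝ) ≤ (n:ℝ)^(σ:ℝ) * n.factorial * ((n:ℝ)^((1:ℝ)/2) * n.factorial) := by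
      positivity
    rw [div_mul_div_comm, div_mul_div_comm, div_le_div_iff₀ (by positivity) (by positivity)]
    calc (n:ℝ)^((1:ℝ)/2) * n.factorial * ((n:ℝ)^(σ:ℝ) * n.factorial) * (Qs * Ph)
        = (n:ℝ)^(σ:ℝ) * n.factorial * ((n:ℝ)^((1:ℝ)/2) * n.factorial) * (Qs * Ph) := by ring
      _ ≤ (n:ℝ)^(σ:ℝ) * n.factorial * ((n:ℝ)^((1:ℝ)/2) * n.factorial) * (Qh * Ps) :=
          mul_le_mul_of_nonneg_left hprod hnum
      _ = (n:ℝ)^(σ:ℝ) * ↑n.factorial * ((n:ℝ)^((1:ℝ)/2) * ↑n.factorial) * (Qh * Ps) := by ring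
  -- pass to the limit
  have t1 : Filter.Tendsto
      (fun n => ‖Complex.GammaSeq ((1:ℂ)/2 + τ * Complex.I) n‖ * Real.GammaSeq σ n)
      Filter.atTop (𝓝 (‖Complex.Gamma ((1:ℂ)/2 + τ * Complex.I)‖ * Real.Gamma σ)) :=
    ((continuous_norm.tendsto _).comp (Complex.GammaSeq_tendsto_Gamma _)).mul
      (Real.GammaSeq_tendsto_Gamma σ)
  have t2 : Filter.Tendsto
      (fun n => ‖Complex.GammaSeq (↑σ + τ * Complex.I) n‖ * Real.GammaSeq (1/2) n)
      Filter.atTop (𝓝 (‖Complex.Gamma (↑σ + τ * Complex.I)‖ * Real.Gamma (1/2))) :=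
    ((continuous_norm.tendsto _).comp (Complex.GammaSeq_tendsto_Gamma _)).mul
      (Real.GammaSeq_tendsto_Gamma (1/2))
  have hle : ‖Complex.Gamma ((1:ℂ)/2 + τ * Complex.I)‖ * Real.Gamma σ
      ≤ ‖Complex.Gamma (↑σ + τ * Complex.I)‖ * Real.Gamma (1/2) :=
    le_of_tendsto_of_tendsto t1 t2 (Filter.eventually_atTop.2 ⟨1, key⟩)
  -- finish the algebra
  set B := ‖Complex.Gamma ((1:ℂ)/2 + τ * Complex.I)‖ with hB
  have hBc : B^2 * Real.cosh (Real.pi * τ) = Real.pi := by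
    have := abs_Gamma_half τ
    rw [hB]; exact_mod_cast this
  have hBne : B ≠ 0 := by
    intro h0; rw [h0] at hBc; simp at hBc
    exact Real.pi_ne_zero hBc.symm
  have hBpos : 0 < B := lt_of_le_of_ne (norm_nonneg _) (Ne.symm hBne)
  have hBsq : B * Real.sqrt (Real.cosh (Real.pi * τ)) = Real.sqrt Real.pi := by
    rw [← Real.sqrt_sq hBpos.le, ← Real.sqrt_mul (sq_nonneg B), hBc]
  rw [Real.Gamma_one_half_eq, ← hBsq] at hle
  have := (mul_le_mul_iff_right₀ hBpos).1 (by linarith [hle] : B * Real.Gamma σ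
    ≤ B * (‖Complex.Gamma (↑σ + τ * Complex.I)‖ * Real.sqrt (Real.cosh (Real.pi * τ))))
  exact this

lemma abs_GammaC (z : ℂ) :
    ‖GammaC z‖
      = 2 * (2 * Real.pi) ^ (-z.re) * ‖Complex.Gamma z‖ := by
  rw [GammaC, norm_mul, norm_mul]
  congr 2
  · simp
  · rw [show ((2:ℂ) * (Real.pi:ℂ)) = (((2*Real.pi : ℝ)):ℂ) by push_cast; ring,
      Complex.norm_cpow_eq_rpow_re_of_pos (by positivity), Complex.neg_re]

end Aux

/-- For `s = σ + iτ` with `σ < 0` and `s` not an integer,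
`γ_ℂ(s) ≥ (2π)^{σ-1/2}/√π · Γ(1-σ) · tanh(π|τ|)^{1/2}`. -/
theorem gammaCFactor_lower_bound (σ τ : ℝ) (hσ : σ < 0)
    (hs : ∀ n : ℤ, (σ + τ * Complex.I : ℂ) ≠ (n : ℂ)) :
    (2 * Real.pi) ^ (σ - 1/2) / Real.sqrt Real.pi * Real.Gamma (1 - σ) *
        Real.sqrt (Real.tanh (Real.pi * |τ|)) ≤
      gammaCFactor (σ + τ * Complex.I) := by
  set s : ℂ := σ + τ * Complex.I with hs_def
  have pi_pos := Real.pi_pos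
  have hΓs_ne : Complex.Gamma s ≠ 0 := by
    apply Complex.Gamma_ne_zero
    intro m hm
    exact hs (-m) (by rw [hm]; push_cast; ring)
  have hΓ1s_ne : Complex.Gamma (1 - s) ≠ 0 := by
    apply Complex.Gamma_ne_zero
    intro m hm
    apply hs (1 + m)
    have h2 : s = 1 + (m:ℂ) := by linear_combination -hm
    rw [h2]; push_cast; ring
  set X := ‖Complex.Gamma (1 - s)‖ with hX_def
  set Y := ‖Complex.Gamma s‖ with hY_def
  set S := ‖Complex.sin (↑Real.pi * s)‖ with hS_def
  have hX0 : 0 < X := norm_pos_iff.mpr hΓ1s_ne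
  have hY0 : 0 < Y := norm_pos_iff.mpr hΓs_ne
  have habs : Y * X = Real.pi / S := by
    rw [hY_def, hX_def, hS_def, ← norm_mul, Complex.Gamma_mul_Gamma_one_sub, norm_div,
      Complex.norm_real, Real.norm_eq_abs, abs_of_pos pi_pos]
  have hSne : S ≠ 0 := by
    intro h0
    rw [h0, div_zero] at habs
    exact (mul_pos hY0 hX0).ne' habs
  have hS0 : 0 < S := lt_of_le_of_ne (norm_nonneg _) (Ne.symm hSne)
  have hprod : Y * X * S = Real.pi := by
    rw [habs]; field_simp
  -- real part computations
  have h1re : (1 - s).re = 1 - σ := by simp [hs_def]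
  have hres : s.re = σ := by simp [hs_def]
  -- rewrite the abs of the ratio
  have hba : (2*Real.pi)^(σ-1 : ℝ) = (2*Real.pi)^(2*σ-1 : ℝ) * (2*Real.pi)^(-σ : ℝ) := by
    rw [← Real.rpow_add (by positivity)]; congr 1; ring
  have hr : ‖GammaC (1 - s) / GammaC s‖
      = (2*Real.pi)^(2*σ-1 : ℝ) * X^2 * S / Real.pi := by
    rw [norm_div, abs_GammaC, abs_GammaC, h1re, hres, show -(1-σ) = σ-1 by ring, hba,
      div_eq_div_iff (by positivity) pi_pos.ne']
    rw [← hX_def, ← hY_def]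
    linear_combination (-2 * (2*Real.pi)^(2*σ-1 : ℝ) * (2*Real.pi)^(-σ : ℝ) * X) * hprod
  rw [gammaCFactor, hr]
  -- bounds
  have hGpos : 0 < Real.Gamma (1 - σ) := Real.Gamma_pos_of_pos (by linarith)
  have htanh0 : 0 ≤ Real.tanh (Real.pi * |τ|) := by
    rw [Real.tanh_eq_sinh_div_cosh]
    have : 0 ≤ Real.sinh (Real.pi * |τ|) := by positivity
    positivity
  rw [show Real.pi * |τ| = |Real.pi * τ| by rw [abs_mul, abs_of_pos pi_pos]]
  apply Real.le_sqrt_of_sq_le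
  have hX_low : Real.Gamma (1 - σ) ≤ X * Real.sqrt (Real.cosh (Real.pi * τ)) := by
    have h1s : (1 : ℂ) - s = ((1 - σ : ℝ) : ℂ) + ((-τ : ℝ) : ℂ) * Complex.I := by
      rw [hs_def]; push_cast; ring
    have := abs_Gamma_lower (1 - σ) (-τ) (by linarith)
    rw [show Real.pi * -τ = -(Real.pi * τ) by ring, Real.cosh_neg] at this
    rw [hX_def, h1s]
    exact this
  have hS_low : Real.sinh |Real.pi * τ| ≤ S := by
    have hps : (↑Real.pi * s : ℂ)
        = ((Real.pi * σ : ℝ) : ℂ) + ((Real.pi * τ : ℝ) : ℂ) * Complex.I := by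
      rw [hs_def]; push_cast; ring
    rw [hS_def, hps]
    exact sinh_le_abs_sin _ _
  have hcosh0 : 0 < Real.cosh (Real.pi * τ) := Real.cosh_pos _
  have hG2 : Real.Gamma (1 - σ)^2 ≤ X^2 * Real.cosh (Real.pi * τ) := by
    nlinarith [Real.sq_sqrt hcosh0.le, Real.sqrt_nonneg (Real.cosh (Real.pi * τ))]
  have core : Real.Gamma (1 - σ)^2 * Real.tanh |Real.pi * τ| ≤ X^2 * S := by
    rw [Real.tanh_eq_sinh_div_cosh, Real.cosh_abs, ← mul_div_assoc,
      div_le_iff₀ hcosh0]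
    have hsinh0 : 0 ≤ Real.sinh |Real.pi * τ| := by positivity
    nlinarith [mul_le_mul_of_nonneg_right hG2 hsinh0,
      mul_le_mul_of_nonneg_left hS_low (by positivity : (0:ℝ) ≤ X^2 * Real.cosh (Real.pi * τ))]
  have hu : (0:ℝ) < (2*Real.pi)^(2*σ-1 : ℝ) := by positivity
  calc ((2*Real.pi)^(σ-1/2 : ℝ) / Real.sqrt Real.pi * Real.Gamma (1-σ)
        * Real.sqrt (Real.tanh |Real.pi * τ|))^2
      = ((2*Real.pi)^(σ-1/2 : ℝ))^2 / (Real.sqrt Real.pi)^2 * Real.Gamma (1-σ)^2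
        * (Real.sqrt (Real.tanh |Real.pi * τ|))^2 := by ring
    _ = (2*Real.pi)^(2*σ-1 : ℝ) * (Real.Gamma (1-σ)^2 * Real.tanh |Real.pi * τ|) / Real.pi := by
        rw [Real.sq_sqrt pi_pos.le, Real.sq_sqrt (by rw [abs_mul, abs_of_pos pi_pos]; exact htanh0),
          show ((2*Real.pi)^(σ-1/2 : ℝ))^2 = (2*Real.pi)^(2*σ-1 : ℝ) by
            rw [sq, ← Real.rpow_add (by positivity)]; congr 1; ring]
        ring
    _ ≤ (2*Real.pi)^(2*σ-1 : ℝ) * (X^2 * S) / Real.pi := by gcongr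
    _ = (2*Real.pi)^(2*σ-1 : ℝ) * X^2 * S / Real.pi := by ring
end

section
/- For s = σ + iτ with σ < 0 and τ ≠ 0, |Γ_ℂ(1-s)/Γ_ℂ(s)| ≥ (2π)^{2σ-1} Γ(1-σ)² |τ|. -/
open Real Complex

open Filter Topology Finset

lemma abs_sinh_le_abs_sin (a b : ℝ) :
    |Real.sinh b| ≤ ‖Complex.sin (a + b * Complex.I)‖ := by
  have h : Complex.sin (a + b * Complex.I)
      = ((Real.sin a * Real.cosh b : ℝ) : ℂ) + ((Real.cos a * Real.sinh b : ℝ) : ℂ) * Complex.I := by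
    rw [Complex.sin_add, Complex.cos_mul_I, Complex.sin_mul_I]
    push_cast
    ring
  rw [h, Complex.norm_add_mul_I, ← Real.sqrt_sq_eq_abs]
  apply Real.sqrt_le_sqrt
  nlinarith [Real.sin_sq_add_cos_sq a, Real.cosh_sq b, sq_nonneg (Real.sin a),
    sq_nonneg (Real.sinh b)]

lemma abs_Gamma_one_add_mul_I_sq (y : ℝ) (hy : y ≠ 0) :
    ‖Complex.Gamma (1 + y * Complex.I)‖ ^ 2 = π * y / Real.sinh (π * y) := by
  have h0 : (y : ℂ) * Complex.I ≠ 0 := by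
    simp [hy, Complex.I_ne_zero]
  have hsinh : Real.sinh (π * y) ≠ 0 := by
    rw [Real.sinh_ne_zero]
    exact mul_ne_zero Real.pi_ne_zero hy
  have hadd : Complex.Gamma (1 + y * Complex.I)
      = y * Complex.I * Complex.Gamma (y * Complex.I) := by
    rw [add_comm, Complex.Gamma_add_one _ h0]
  have hconj : Complex.Gamma (1 - y * Complex.I)
      = (starRingEnd ℂ) (Complex.Gamma (1 + y * Complex.I)) := by
    rw [← Complex.Gamma_conj]
    congr 1
    simp [map_add, map_mul, Complex.conj_I, Complex.conj_ofReal, sub_eq_add_neg]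
  have hrefl := Complex.Gamma_mul_Gamma_one_sub ((y : ℂ) * Complex.I)
  have hsin : Complex.sin (π * ((y : ℂ) * Complex.I)) = (Real.sinh (π * y) : ℂ) * Complex.I := by
    rw [show (π : ℂ) * ((y : ℂ) * Complex.I) = ((π * y : ℝ) : ℂ) * Complex.I by push_cast; ring,
      Complex.sin_mul_I, Complex.ofReal_sinh]
  have key : Complex.Gamma (1 + y * Complex.I) * (starRingEnd ℂ) (Complex.Gamma (1 + y * Complex.I))
      = ((π * y / Real.sinh (π * y) : ℝ) : ℂ) := by
    rw [← hconj, hadd, mul_assoc, hrefl, hsin]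
    push_cast
    field_simp
  have := Complex.mul_conj (Complex.Gamma (1 + y * Complex.I))
  rw [key] at this
  rw [Complex.sq_norm]
  exact_mod_cast this.symm


lemma gammaSeq_abs_eq (z : ℂ) {n : ℕ} (hn : 0 < n) :
    ‖Complex.GammaSeq z n‖
      = (n : ℝ) ^ z.re * (n.factorial : ℝ) / ∏ j ∈ Finset.range (n + 1), ‖z + j‖ := by
  rw [Complex.GammaSeq, norm_div, norm_mul, norm_prod]
  congr 2
  · rw [show ((n : ℂ)) = (((n : ℝ) : ℂ)) by norm_cast,
      Complex.norm_cpow_eq_rpow_re_of_pos (by exact_mod_cast hn)]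
  · simp

lemma gs_key_ineq (x y : ℝ) (hx : 1 ≤ x) {n : ℕ} (hn : 0 < n) :
    ‖Complex.GammaSeq (x : ℂ) n‖
        * ‖Complex.GammaSeq (1 + y * Complex.I) n‖
      ≤ ‖Complex.GammaSeq ((x : ℝ) + y * Complex.I) n‖ := by
  have hx0 : (0 : ℝ) < x := lt_of_lt_of_le one_pos hx
  rw [gammaSeq_abs_eq _ hn, gammaSeq_abs_eq _ hn, gammaSeq_abs_eq _ hn]
  have hB : ∀ j ∈ Finset.range (n + 1), ‖(x : ℂ) + j‖ = x + j := by
    intro j _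
    rw [show ((x : ℂ) + j) = (((x + j : ℝ)) : ℂ) by push_cast; ring, Complex.norm_real, Real.norm_eq_abs,
      abs_of_pos (by positivity)]
  have hA : ∀ j ∈ Finset.range (n + 1),
      ‖((x : ℝ) + y * Complex.I) + j‖ = Real.sqrt ((x + j) ^ 2 + y ^ 2) := by
    intro j _
    rw [show (((x : ℝ) : ℂ) + y * Complex.I + j) = (((x + j : ℝ)) : ℂ) + (y : ℝ) * Complex.I
      by push_cast; ring, Complex.norm_add_mul_I]
  have hC : ∀ j ∈ Finset.range (n + 1),
      ‖(1 + y * Complex.I) + j‖ = Real.sqrt ((1 + j) ^ 2 + y ^ 2) := by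
    intro j _
    rw [show ((1 : ℂ) + y * Complex.I + j) = (((1 + j : ℝ)) : ℂ) + (y : ℝ) * Complex.I
      by push_cast; ring, Complex.norm_add_mul_I]
  rw [Finset.prod_congr rfl hB, Finset.prod_congr rfl hA, Finset.prod_congr rfl hC]
  simp only [Complex.add_re, Complex.ofReal_re, Complex.one_re, Complex.mul_re,
    Complex.ofReal_im, Complex.I_re, Complex.I_im, mul_zero, mul_one, zero_mul, sub_zero,
    zero_sub, add_zero]
  set A : ℝ := ∏ j ∈ Finset.range (n + 1), Real.sqrt ((x + j) ^ 2 + y ^ 2) with hAdef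
  set B : ℝ := ∏ j ∈ Finset.range (n + 1), (x + (j : ℝ)) with hBdef
  set C : ℝ := ∏ j ∈ Finset.range (n + 1), Real.sqrt ((1 + j) ^ 2 + y ^ 2) with hCdef
  have hApos : 0 < A := Finset.prod_pos fun j _ => Real.sqrt_pos.2 (by positivity)
  have hBpos : 0 < B := Finset.prod_pos fun j _ => by positivity
  have hCpos : 0 < C := Finset.prod_pos fun j _ => Real.sqrt_pos.2 (by positivity)
  have hfac : (0 : ℝ) < (n.factorial : ℝ) := by exact_mod_cast n.factorial_pos
  have hnR : (0 : ℝ) < (n : ℝ) := by exact_mod_cast hn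
  -- main finite inequality : n * n! * A ≤ B * C
  have main : (n : ℝ) * (n.factorial : ℝ) * A ≤ B * C := by
    have hsq : ((n : ℝ) * (n.factorial : ℝ) * A) ^ 2 ≤ (B * C) ^ 2 := by
      have hA2 : A ^ 2 = ∏ j ∈ Finset.range (n + 1), ((x + j) ^ 2 + y ^ 2) := by
        rw [hAdef, ← Finset.prod_pow]
        exact Finset.prod_congr rfl fun j _ => Real.sq_sqrt (by positivity)
      have hC2 : C ^ 2 = ∏ j ∈ Finset.range (n + 1), ((1 + (j : ℝ)) ^ 2 + y ^ 2) := by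
        rw [hCdef, ← Finset.prod_pow]
        exact Finset.prod_congr rfl fun j _ => Real.sq_sqrt (by positivity)
      have hfac2 : ((n : ℝ) * (n.factorial : ℝ)) ^ 2 ≤ ∏ j ∈ Finset.range (n + 1), (1 + (j : ℝ)) ^ 2 := by
        have h1 : ∏ j ∈ Finset.range (n + 1), (1 + (j : ℝ)) = ((n + 1).factorial : ℝ) := by
          rw [← Finset.prod_range_add_one_eq_factorial (n + 1)]
          push_cast
          exact Finset.prod_congr rfl fun j _ => by ring
        rw [Finset.prod_pow, h1]
        have : (n : ℝ) * (n.factorial : ℝ) ≤ ((n + 1).factorial : ℝ) := by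
          rw [Nat.factorial_succ]
          push_cast
          nlinarith [hfac]
        nlinarith [this, mul_pos hnR hfac]
      have termwise : ∏ j ∈ Finset.range (n + 1), ((1 + (j : ℝ)) ^ 2 * ((x + j) ^ 2 + y ^ 2))
          ≤ ∏ j ∈ Finset.range (n + 1), ((x + (j : ℝ)) ^ 2 * ((1 + j) ^ 2 + y ^ 2)) := by
        apply Finset.prod_le_prod
        · intro j _; positivity
        · intro j _
          have h1j : ((1 : ℝ) + j) ^ 2 ≤ (x + j) ^ 2 := by nlinarith [show (0:ℝ) ≤ (j:ℝ) by positivity]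
          nlinarith [mul_le_mul_of_nonneg_left h1j (sq_nonneg y)]
      calc ((n : ℝ) * (n.factorial : ℝ) * A) ^ 2 = ((n : ℝ) * (n.factorial : ℝ)) ^ 2 * A ^ 2 := by ring
        _ ≤ (∏ j ∈ Finset.range (n + 1), (1 + (j : ℝ)) ^ 2) * A ^ 2 := by
            apply mul_le_mul_of_nonneg_right hfac2 (by positivity)
        _ = ∏ j ∈ Finset.range (n + 1), ((1 + (j : ℝ)) ^ 2 * ((x + j) ^ 2 + y ^ 2)) := by
            rw [hA2, ← Finset.prod_mul_distrib]
        _ ≤ ∏ j ∈ Finset.range (n + 1), ((x + (j : ℝ)) ^ 2 * ((1 + j) ^ 2 + y ^ 2)) := termwise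
        _ = (B * C) ^ 2 := by
            rw [mul_pow, hC2, hBdef, ← Finset.prod_pow, ← Finset.prod_mul_distrib]
    have h1 : (0 : ℝ) ≤ (n : ℝ) * (n.factorial : ℝ) * A := by positivity
    have h2 : (0 : ℝ) ≤ B * C := by positivity
    nlinarith [hsq, h1, h2]
  rw [div_mul_div_comm, div_le_div_iff₀ (by positivity) (by positivity)]
  have hpowx : (0 : ℝ) < (n : ℝ) ^ x := Real.rpow_pos_of_pos hnR x
  have h1n : (n : ℝ) ^ (1 : ℝ) = (n : ℝ) := Real.rpow_one _
  calc (n : ℝ) ^ x * (n.factorial : ℝ) * ((n : ℝ) ^ (1:ℝ) * (n.factorial : ℝ)) * A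
      = ((n : ℝ) ^ x * (n.factorial : ℝ)) * ((n : ℝ) * (n.factorial : ℝ) * A) := by rw [h1n]; ring
    _ ≤ ((n : ℝ) ^ x * (n.factorial : ℝ)) * (B * C) := by
        apply mul_le_mul_of_nonneg_left main (by positivity)
    _ = (n : ℝ) ^ x * (n.factorial : ℝ) * (B * C) := by ring

lemma abs_Gamma_ge (x y : ℝ) (hx : 1 ≤ x) :
    Real.Gamma x * ‖Complex.Gamma (1 + y * Complex.I)‖
      ≤ ‖Complex.Gamma ((x : ℝ) + y * Complex.I)‖ := by
  have t1 : Tendsto (fun n => ‖Complex.GammaSeq (x : ℂ) n‖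
        * ‖Complex.GammaSeq (1 + y * Complex.I) n‖) atTop
      (nhds (‖Complex.Gamma (x : ℂ)‖
        * ‖Complex.Gamma (1 + y * Complex.I)‖)) :=
    ((continuous_norm.tendsto _).comp (Complex.GammaSeq_tendsto_Gamma _)).mul
      ((continuous_norm.tendsto _).comp (Complex.GammaSeq_tendsto_Gamma _))
  have t2 : Tendsto (fun n => ‖Complex.GammaSeq ((x : ℝ) + y * Complex.I) n‖) atTop
      (nhds (‖Complex.Gamma ((x : ℝ) + y * Complex.I)‖)) :=
    (continuous_norm.tendsto _).comp (Complex.GammaSeq_tendsto_Gamma _)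
  have hev : ∀ᶠ n in atTop, ‖Complex.GammaSeq (x : ℂ) n‖
        * ‖Complex.GammaSeq (1 + y * Complex.I) n‖
      ≤ ‖Complex.GammaSeq ((x : ℝ) + y * Complex.I) n‖ := by
    filter_upwards [eventually_gt_atTop 0] with n hn
    exact gs_key_ineq x y hx hn
  have := le_of_tendsto_of_tendsto t1 t2 hev
  rwa [Complex.Gamma_ofReal, Complex.norm_real, Real.norm_eq_abs,
    abs_of_pos (Real.Gamma_pos_of_pos (by linarith))] at this

/-- For `s = σ + iτ` with `σ < 0` and `τ ≠ 0`,
`|Γ_ℂ(1-s)/Γ_ℂ(s)| ≥ (2π)^{2σ-1} Γ(1-σ)² |τ|`. -/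
theorem abs_GammaC_ratio_lower_bound (σ τ : ℝ) (hσ : σ < 0) (hτ : τ ≠ 0) :
    (2 * Real.pi) ^ (2 * σ - 1) * Real.Gamma (1 - σ) ^ 2 * |τ| ≤
      ‖GammaC (1 - (σ + τ * Complex.I)) / GammaC (σ + τ * Complex.I)‖ := by
  set s : ℂ := σ + τ * Complex.I with hs
  have hsim : s.im = τ := by simp [hs]
  have h2π : (0 : ℝ) < 2 * π := by positivity
  have hΓ1s : Complex.Gamma (1 - s) ≠ 0 := by
    apply Complex.Gamma_ne_zero
    intro m h
    apply hτ
    have := congrArg Complex.im h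
    simpa [hs] using this
  have hΓs : Complex.Gamma s ≠ 0 := by
    apply Complex.Gamma_ne_zero
    intro m h
    apply hτ
    have := congrArg Complex.im h
    simpa [hs] using this
  have hrefl := Complex.Gamma_mul_Gamma_one_sub s
  have hsin : Complex.sin (π * s) ≠ 0 := by
    intro h
    rw [h, div_zero] at hrefl
    exact mul_ne_zero hΓs hΓ1s hrefl
  have hπC : (π : ℂ) ≠ 0 := by exact_mod_cast Real.pi_ne_zero
  have hratio : Complex.Gamma (1 - s) / Complex.Gamma s
      = Complex.Gamma (1 - s) ^ 2 * Complex.sin (π * s) / π := by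
    rw [eq_div_iff hsin] at hrefl
    rw [div_eq_div_iff hΓs hπC]
    linear_combination -(Complex.Gamma (1 - s)) * hrefl
  have hsplit : GammaC (1 - s) / GammaC s
      = ((2 * Real.pi : ℝ) : ℂ) ^ (-(1 - s)) / ((2 * Real.pi : ℝ) : ℂ) ^ (-s)
        * (Complex.Gamma (1 - s) / Complex.Gamma s) := by
    rw [GammaC, GammaC]
    push_cast
    ring
  have key : ‖GammaC (1 - s) / GammaC s‖
      = (2 * π) ^ (2 * σ - 1) *
        (‖Complex.Gamma (1 - s)‖ ^ 2 * ‖Complex.sin (π * s)‖ / π) := by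
    rw [hsplit, hratio, norm_mul, norm_div, norm_div, norm_mul, norm_pow,
      Complex.norm_cpow_eq_rpow_re_of_pos h2π, Complex.norm_cpow_eq_rpow_re_of_pos h2π,
      Complex.norm_real, Real.norm_eq_abs, abs_of_pos Real.pi_pos]
    have hre1 : (-(1 - s)).re = σ - 1 := by simp [hs]
    have hre2 : (-s).re = -σ := by simp [hs]
    rw [hre1, hre2, ← Real.rpow_sub h2π, show σ - 1 - -σ = 2 * σ - 1 by ring]
  rw [key]
  have hT : (0 : ℝ) < Real.sinh (π * |τ|) := by
    apply Real.sinh_pos_iff.2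
    positivity
  set T : ℝ := Real.sinh (π * |τ|) with hTdef
  -- |Γ(1-s)|² ≥ Γ(1-σ)² * π|τ|/T
  have h1s : (1 : ℂ) - s = ((1 - σ : ℝ) : ℂ) + (-τ : ℝ) * Complex.I := by
    rw [hs]; push_cast; ring
  have hx1 : (1 : ℝ) ≤ 1 - σ := by linarith
  have h5 : Real.Gamma (1 - σ) * ‖Complex.Gamma (1 + (-τ : ℝ) * Complex.I)‖
      ≤ ‖Complex.Gamma (1 - s)‖ := by
    rw [h1s]
    exact abs_Gamma_ge (1 - σ) (-τ) hx1
  have h6 : ‖Complex.Gamma (1 + (-τ : ℝ) * Complex.I)‖ ^ 2 = π * |τ| / T := by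
    rw [abs_Gamma_one_add_mul_I_sq (-τ) (neg_ne_zero.2 hτ), hTdef]
    rcases abs_cases τ with ⟨h1, h2⟩ | ⟨h1, h2⟩
    · rw [h1, show π * -τ = -(π * τ) by ring, Real.sinh_neg, neg_div_neg_eq]
    · rw [h1, show π * -τ = -(π * τ) by ring]
  have hsq : Real.Gamma (1 - σ) ^ 2 * (π * |τ| / T)
      ≤ ‖Complex.Gamma (1 - s)‖ ^ 2 := by
    have := pow_le_pow_left₀ (by positivity) h5 2
    rwa [mul_pow, h6] at this
  have h7 : T ≤ ‖Complex.sin (π * s)‖ := by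
    have heq : (π : ℂ) * s = ((π * σ : ℝ) : ℂ) + ((π * τ : ℝ) : ℂ) * Complex.I := by
      rw [hs]; push_cast; ring
    rw [heq, hTdef]
    calc Real.sinh (π * |τ|) = |Real.sinh (π * τ)| := by
          rw [Real.abs_sinh, abs_mul, abs_of_pos Real.pi_pos]
      _ ≤ _ := abs_sinh_le_abs_sin _ _
  -- final assembly
  have hτabs : (0 : ℝ) < |τ| := abs_pos.2 hτ
  rw [mul_assoc]
  apply mul_le_mul_of_nonneg_left _ (by positivity)
  calc Real.Gamma (1 - σ) ^ 2 * |τ|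
      = Real.Gamma (1 - σ) ^ 2 * (π * |τ| / T) * T / π := by
        field_simp
    _ ≤ ‖Complex.Gamma (1 - s)‖ ^ 2 * T / π := by gcongr
    _ ≤ ‖Complex.Gamma (1 - s)‖ ^ 2 * ‖Complex.sin (π * s)‖ / π := by
        gcongr
end

section
/- For s = σ + iτ with σ < 0 and τ ≠ 0, |Γ_ℝ(1-s)/Γ_ℝ(s)|² ≥ (2π)^{2σ-1} Γ(1-σ)² |τ| · |tanh(πτ/2)|. -/
open Real Complex

open Filter

section aux

lemma aux_abs_GammaSeq (s : ℂ) (n : ℕ) (hn : 0 < n) :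
    ‖Complex.GammaSeq s n‖ =
      (n : ℝ) ^ s.re * n.factorial / ∏ j ∈ Finset.range (n + 1), ‖s + j‖ := by
  rw [Complex.GammaSeq, norm_div, norm_mul, Complex.norm_prod]
  rw [show ((n : ℕ) : ℂ) = ((n : ℝ) : ℂ) by push_cast; ring,
    Complex.norm_cpow_eq_rpow_re_of_pos (by positivity)]
  simp

lemma aux_term_ineq (x y : ℝ) (hx : 1 ≤ x) (j : ℕ) :
    ‖(x : ℂ) + y * Complex.I + j‖ * (1 + (j : ℝ)) ≤
      (x + j) * ‖1 + (y : ℝ) * Complex.I + j‖ := by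
  have h1 : ‖(x : ℂ) + y * Complex.I + j‖ ^ 2 = (x + j) ^ 2 + y ^ 2 := by
    rw [show (x : ℂ) + y * Complex.I + j = ((x + j : ℝ) : ℂ) + (y : ℝ) * Complex.I by
      push_cast; ring, Complex.sq_norm, Complex.normSq_add_mul_I]
  have h2 : ‖1 + (y : ℝ) * Complex.I + j‖ ^ 2 = (1 + j) ^ 2 + y ^ 2 := by
    rw [show (1 : ℂ) + (y : ℝ) * Complex.I + j = ((1 + j : ℝ) : ℂ) + (y : ℝ) * Complex.I by
      push_cast; ring, Complex.sq_norm, Complex.normSq_add_mul_I]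
  have hj : (0:ℝ) ≤ j := Nat.cast_nonneg j
  have key : (‖(x : ℂ) + y * Complex.I + j‖ * (1 + (j : ℝ))) ^ 2 ≤
      ((x + j) * ‖1 + (y : ℝ) * Complex.I + j‖) ^ 2 := by
    rw [mul_pow, mul_pow, h1, h2]
    have h3 : (1 + (j : ℝ)) ^ 2 ≤ (x + j) ^ 2 := by nlinarith
    nlinarith [mul_le_mul_of_nonneg_left h3 (sq_nonneg y)]
  exact (pow_le_pow_iff_left₀ (by positivity) (by positivity) two_ne_zero).mp key

lemma aux_seq_ineq (x y : ℝ) (hx : 1 ≤ x) (n : ℕ) (hn : 0 < n) :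
    Real.GammaSeq x n * ‖Complex.GammaSeq (1 + (y:ℝ) * Complex.I) n‖ ≤
      ‖Complex.GammaSeq ((x:ℂ) + y * Complex.I) n‖ * Real.GammaSeq 1 n := by
  have hre1 : ((x:ℂ) + y * Complex.I).re = x := by simp
  have hre2 : ((1:ℂ) + (y:ℝ) * Complex.I).re = 1 := by simp
  rw [aux_abs_GammaSeq _ n hn, aux_abs_GammaSeq _ n hn, hre1, hre2, Real.GammaSeq, Real.GammaSeq,
    div_mul_div_comm, div_mul_div_comm]
  have habs_pos : ∀ (z : ℂ), 0 < z.re → 0 < ‖z‖ := fun z hz =>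
    lt_of_lt_of_le (lt_of_lt_of_le hz (le_abs_self _)) (Complex.abs_re_le_norm z)
  have hQ1pos : 0 < ∏ j ∈ Finset.range (n+1), ‖(x:ℂ) + y * Complex.I + j‖ := by
    apply Finset.prod_pos; intro j _
    apply habs_pos; simp; positivity
  have hP2pos : 0 < ∏ j ∈ Finset.range (n+1), (1 + (j:ℝ)) := by
    apply Finset.prod_pos; intro j _; positivity
  have hprod : (∏ j ∈ Finset.range (n+1), ‖(x:ℂ) + y * Complex.I + j‖) *
      (∏ j ∈ Finset.range (n+1), (1 + (j:ℝ))) ≤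
      (∏ j ∈ Finset.range (n+1), (x + (j:ℝ))) *
      (∏ j ∈ Finset.range (n+1), ‖1 + (y:ℝ) * Complex.I + j‖) := by
    rw [← Finset.prod_mul_distrib, ← Finset.prod_mul_distrib]
    apply Finset.prod_le_prod
    · intro j _; positivity
    · intro j _; exact aux_term_ineq x y hx j
  gcongr

lemma aux_gamma_abs_lower (x y : ℝ) (hx : 1 ≤ x) :
    Real.Gamma x * ‖Complex.Gamma (1 + (y:ℝ) * Complex.I)‖ ≤
      ‖Complex.Gamma ((x:ℂ) + y * Complex.I)‖ := by
  have h1 : Tendsto (fun n => Real.GammaSeq x n *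
      ‖Complex.GammaSeq (1 + (y:ℝ) * Complex.I) n‖) atTop
      (nhds (Real.Gamma x * ‖Complex.Gamma (1 + (y:ℝ) * Complex.I)‖)) :=
    (Real.GammaSeq_tendsto_Gamma x).mul
      ((continuous_norm.tendsto _).comp (Complex.GammaSeq_tendsto_Gamma _))
  have h2 : Tendsto (fun n => ‖Complex.GammaSeq ((x:ℂ) + y * Complex.I) n‖ *
      Real.GammaSeq 1 n) atTop
      (nhds (‖Complex.Gamma ((x:ℂ) + y * Complex.I)‖ * Real.Gamma 1)) :=
    (((continuous_norm.tendsto _).comp (Complex.GammaSeq_tendsto_Gamma _)).mul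
      (Real.GammaSeq_tendsto_Gamma 1))
  rw [Real.Gamma_one, mul_one] at h2
  refine le_of_tendsto_of_tendsto h1 h2 ?_
  filter_upwards [eventually_gt_atTop 0] with n hn
  exact aux_seq_ineq x y hx n hn

lemma aux_abs_Gamma_one_add_mul_I_sq (y : ℝ) (hy : y ≠ 0) :
    ‖Complex.Gamma (1 + (y:ℝ) * Complex.I)‖ ^ 2 = π * y / Real.sinh (π * y) := by
  have hz : (y:ℂ) * Complex.I ≠ 0 := by simp [hy, Complex.I_ne_zero]
  have hsinh : Real.sinh (π * y) ≠ 0 := by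
    rw [Real.sinh_ne_zero]
    exact mul_ne_zero Real.pi_ne_zero hy
  have hconj : (starRingEnd ℂ) (1 + (y:ℂ) * Complex.I) = 1 - (y:ℂ) * Complex.I := by
    simp [Complex.conj_ofReal]
    ring
  have h1 : ((‖Complex.Gamma (1 + (y:ℝ) * Complex.I)‖ ^ 2 : ℝ) : ℂ) =
      Complex.Gamma (1 + (y:ℂ) * Complex.I) * Complex.Gamma (1 - (y:ℂ) * Complex.I) := by
    rw [Complex.sq_norm, ← Complex.mul_conj, ← Complex.Gamma_conj, hconj]
  have hsin : Complex.sin (π * ((y:ℂ) * Complex.I)) =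
      (Real.sinh (π * y) : ℂ) * Complex.I := by
    rw [show (π : ℂ) * ((y:ℂ) * Complex.I) = ((π * y : ℝ) : ℂ) * Complex.I by push_cast; ring,
      Complex.sin_mul_I, Complex.ofReal_sinh]
  have h2 : Complex.Gamma (1 + (y:ℂ) * Complex.I) * Complex.Gamma (1 - (y:ℂ) * Complex.I) =
      ((π * y / Real.sinh (π * y) : ℝ) : ℂ) := by
    rw [show (1 : ℂ) + (y:ℂ) * Complex.I = (y:ℂ) * Complex.I + 1 by ring,
      Complex.Gamma_add_one _ hz, mul_assoc,
      Complex.Gamma_mul_Gamma_one_sub ((y:ℂ) * Complex.I), hsin]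
    have hS : ((Real.sinh (π * y) : ℝ) : ℂ) ≠ 0 := by exact_mod_cast hsinh
    have hSI : ((Real.sinh (π * y) : ℝ) : ℂ) * Complex.I ≠ 0 := mul_ne_zero hS Complex.I_ne_zero
    rw [Complex.ofReal_div, Complex.ofReal_mul, mul_div_assoc', div_eq_div_iff hSI hS]
    ring
  rw [h2] at h1
  exact_mod_cast h1

lemma aux_abs_sin_sq (a b : ℝ) :
    ‖Complex.sin ((a:ℂ) + b * Complex.I)‖ ^ 2 =
      Real.sin a ^ 2 + Real.sinh b ^ 2 := by
  have h : Complex.sin ((a:ℂ) + b * Complex.I) =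
      ((Real.sin a * Real.cosh b : ℝ) : ℂ) + ((Real.cos a * Real.sinh b : ℝ) : ℂ) * Complex.I := by
    rw [Complex.sin_add, Complex.cos_mul_I, Complex.sin_mul_I]
    push_cast
    ring
  rw [h, Complex.sq_norm, Complex.normSq_add_mul_I]
  have h1 := Real.sin_sq_add_cos_sq a
  have h2 := Real.cosh_sq b
  nlinarith

lemma aux_key_id (τ : ℝ) (hτ : τ ≠ 0) :
    2 * π * (|τ| * |Real.tanh (π * τ / 2)|) =
      4 * (π * τ / Real.sinh (π * τ)) * Real.sinh (π * τ / 2) ^ 2 := by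
  have hc : 0 < Real.cosh (π * τ / 2) := Real.cosh_pos (π * τ / 2)
  have hs2 : Real.sinh (π * τ / 2) ≠ 0 := by
    rw [Real.sinh_ne_zero]
    exact div_ne_zero (mul_ne_zero Real.pi_ne_zero hτ) two_ne_zero
  have hdup : Real.sinh (π * τ) = 2 * Real.sinh (π * τ / 2) * Real.cosh (π * τ / 2) := by
    rw [← Real.sinh_two_mul]; ring_nf
  have habs : |τ| * |Real.tanh (π * τ / 2)| = τ * Real.tanh (π * τ / 2) := by
    rw [← abs_mul, _root_.abs_of_nonneg]
    rcases lt_or_gt_of_ne hτ with h | h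
    · have hsneg : Real.sinh (π * τ / 2) < 0 := by
        rw [← Real.sinh_zero]
        apply Real.sinh_lt_sinh.mpr
        have := Real.pi_pos; nlinarith
      rw [Real.tanh_eq_sinh_div_cosh]
      have : Real.sinh (π * τ / 2) / Real.cosh (π * τ / 2) < 0 := div_neg_of_neg_of_pos hsneg hc
      nlinarith
    · have hspos : 0 < Real.sinh (π * τ / 2) := by
        rw [← Real.sinh_zero]
        apply Real.sinh_lt_sinh.mpr
        have := Real.pi_pos; nlinarith
      rw [Real.tanh_eq_sinh_div_cosh]
      have : 0 < Real.sinh (π * τ / 2) / Real.cosh (π * τ / 2) := div_pos hspos hc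
      nlinarith
  rw [habs, Real.tanh_eq_sinh_div_cosh, hdup]
  field_simp
  ring

end aux


/-- For `s = σ + iτ` with `σ < 0` and `τ ≠ 0`,
`|Γ_ℝ(1-s)/Γ_ℝ(s)|² ≥ (2π)^{2σ-1} Γ(1-σ)² |τ| |tanh(πτ/2)|`. -/
theorem abs_GammaR_ratio_sq_lower_bound (σ τ : ℝ) (hσ : σ < 0) (hτ : τ ≠ 0) :
    (2 * Real.pi) ^ (2 * σ - 1) * Real.Gamma (1 - σ) ^ 2 * |τ| *
        |Real.tanh (Real.pi * τ / 2)| ≤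
      ‖GammaR (1 - (σ + τ * Complex.I)) / GammaR (σ + τ * Complex.I)‖ ^ 2 := by
  set s : ℂ := σ + τ * Complex.I with hs
  have hsre : s.re = σ := by simp [hs]
  -- reflection formula
  have hcond : ∀ n : ℕ, (1 - s) ≠ -(2 * (n:ℂ) + 1) := by
    intro n hn
    have h := congrArg Complex.re hn
    simp [hs] at h
    have : (0:ℝ) ≤ n := Nat.cast_nonneg n
    linarith
  have hratio : GammaR (1 - s) / GammaR s =
      Complex.Gammaℂ (1 - s) * Complex.sin ((π:ℂ) * s / 2) := by
    have h := Complex.Gammaℝ_div_Gammaℝ_one_sub (s := 1 - s) hcond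
    rw [show (1:ℂ) - (1-s) = s by ring] at h
    rw [show (π:ℂ) * (1 - s) / 2 = (π:ℂ)/2 - (π:ℂ) * s / 2 by ring,
      Complex.cos_pi_div_two_sub] at h
    exact h
  -- absolute value
  set A := ‖Complex.Gamma (1 - s)‖ with hA
  set B := ‖Complex.sin ((π:ℂ) * s / 2)‖ with hB
  have habs2 : ‖GammaR (1 - s) / GammaR s‖ ^ 2 =
      4 * ((2*π) ^ (σ-1)) ^ 2 * A ^ 2 * B ^ 2 := by
    rw [hratio, norm_mul, Complex.Gammaℂ, norm_mul, norm_mul]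
    rw [show ((2:ℂ) * (π:ℂ)) = ((2*π : ℝ) : ℂ) by push_cast; ring,
      Complex.norm_cpow_eq_rpow_re_of_pos (by positivity)]
    rw [show (-(1-s)).re = σ - 1 by simp [hs]]
    rw [Complex.norm_ofNat]
    ring
  rw [habs2]
  -- lower bound for A
  set G := Real.Gamma (1 - σ) with hG
  set c := ‖Complex.Gamma (1 + ((-τ : ℝ):ℝ) * Complex.I)‖ with hc
  have hAlow : G * c ≤ A := by
    have h := aux_gamma_abs_lower (1 - σ) (-τ) (by linarith)
    rw [show (((1 - σ : ℝ)):ℂ) + ((-τ : ℝ):ℝ) * Complex.I = 1 - s by push_cast [hs]; ring] at h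
    exact h
  have hc2 : c ^ 2 = π * τ / Real.sinh (π * τ) := by
    rw [hc, aux_abs_Gamma_one_add_mul_I_sq (-τ) (neg_ne_zero.mpr hτ)]
    rw [mul_neg, Real.sinh_neg]
    rw [neg_div_neg_eq]
  have hA2 : G ^ 2 * (π * τ / Real.sinh (π * τ)) ≤ A ^ 2 := by
    rw [← hc2, ← mul_pow]
    have hGc : 0 ≤ G * c := by
      apply mul_nonneg _ (norm_nonneg _)
      rw [hG]; exact Real.Gamma_nonneg_of_nonneg (by linarith)
    exact pow_le_pow_left₀ hGc hAlow 2
  -- lower bound for B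
  have hB2 : Real.sinh (π * τ / 2) ^ 2 ≤ B ^ 2 := by
    rw [hB, show (π:ℂ) * s / 2 = (((π * σ / 2 : ℝ)):ℂ) + ((π * τ / 2 : ℝ):ℝ) * Complex.I by
      push_cast [hs]; ring, aux_abs_sin_sq]
    nlinarith [sq_nonneg (Real.sin (π * σ / 2))]
  -- power identity
  have hpow : (2*π) ^ (2*σ-1) = ((2*π) ^ (σ-1)) ^ 2 * (2*π) := by
    rw [show 2*σ-1 = (σ-1)*2 + 1 by ring, Real.rpow_add (by positivity), Real.rpow_one,
      Real.rpow_mul (by positivity), Real.rpow_two]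
  calc (2*π) ^ (2*σ-1) * G ^ 2 * |τ| * |Real.tanh (π * τ / 2)|
      = ((2*π) ^ (σ-1)) ^ 2 * G ^ 2 * (2 * π * (|τ| * |Real.tanh (π * τ / 2)|)) := by
        rw [hpow]; ring
    _ = ((2*π) ^ (σ-1)) ^ 2 * G ^ 2 *
        (4 * (π * τ / Real.sinh (π * τ)) * Real.sinh (π * τ / 2) ^ 2) := by
        rw [aux_key_id τ hτ]
    _ = 4 * ((2*π) ^ (σ-1)) ^ 2 * (G ^ 2 * (π * τ / Real.sinh (π * τ))) *
        Real.sinh (π * τ / 2) ^ 2 := by ring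
    _ ≤ 4 * ((2*π) ^ (σ-1)) ^ 2 * A ^ 2 * B ^ 2 := by
        have h1 : 0 ≤ G ^ 2 * (π * τ / Real.sinh (π * τ)) := by
          rw [← hc2]; positivity
        have h2 : 0 ≤ Real.sinh (π * τ / 2) ^ 2 := sq_nonneg _
        gcongr
end

section
/- For fixed real σ ≤ 1/2, the function τ ↦ |Γ(1 - σ - iτ)|² / |Γ(σ + iτ)|² is nondecreasing on [0, ∞). -/
open Real Complex Filter

private lemma normSq_GammaSeq_aux (x τ : ℝ) (n : ℕ) (hn : 1 ≤ n) :
    Complex.normSq (Complex.GammaSeq (x + τ * Complex.I) n) =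
      ((n : ℝ) ^ x * n.factorial) ^ 2 /
        ∏ j ∈ Finset.range (n + 1), ((x + j) ^ 2 + τ ^ 2) := by
  have hn' : (0:ℝ) < n := by exact_mod_cast hn
  rw [Complex.GammaSeq, map_div₀, map_mul, map_prod]
  have h1 : Complex.normSq ((n : ℂ) ^ ((x : ℂ) + τ * Complex.I)) = ((n : ℝ) ^ x) ^ 2 := by
    rw [← Complex.sq_norm]
    rw [show ((n : ℂ)) = ((n : ℝ) : ℂ) by push_cast; ring,
      Complex.norm_cpow_eq_rpow_re_of_pos hn']
    norm_num
  have h2 : Complex.normSq ((n.factorial : ℂ)) = (n.factorial : ℝ) ^ 2 := by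
    rw [← Complex.sq_norm]
    simp
  have h3 : ∀ j ∈ Finset.range (n + 1),
      Complex.normSq ((x : ℂ) + τ * Complex.I + (j : ℂ)) = (x + j) ^ 2 + τ ^ 2 := by
    intro j _
    have : (x : ℂ) + τ * Complex.I + (j : ℂ) = ((x + (j : ℝ) : ℝ) : ℂ) + (τ : ℂ) * Complex.I := by
      push_cast; ring
    rw [this, Complex.normSq_add_mul_I]
  rw [h1, h2, Finset.prod_congr rfl h3, mul_pow]

private lemma factor_mono {σ : ℝ} (hσ : σ ≤ 1/2) (j : ℕ) {τ₁ τ₂ : ℝ}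
    (h0 : 0 ≤ τ₁) (h12 : τ₁ ≤ τ₂) :
    ((σ + j) ^ 2 + τ₁ ^ 2) / ((1 - σ + j) ^ 2 + τ₁ ^ 2) ≤
      ((σ + j) ^ 2 + τ₂ ^ 2) / ((1 - σ + j) ^ 2 + τ₂ ^ 2) := by
  have hj : (0:ℝ) ≤ j := j.cast_nonneg
  have hB : (0:ℝ) < 1 - σ + j := by linarith
  have d1 : (0:ℝ) < (1 - σ + j) ^ 2 + τ₁ ^ 2 := by positivity
  have d2 : (0:ℝ) < (1 - σ + j) ^ 2 + τ₂ ^ 2 := by positivity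
  rw [div_le_div_iff₀ d1 d2]
  have hτ : 0 ≤ τ₂ ^ 2 - τ₁ ^ 2 := by nlinarith
  have hAB : 0 ≤ (1 - σ + j) ^ 2 - (σ + j) ^ 2 := by nlinarith
  nlinarith [mul_nonneg hτ hAB]

/-- For fixed real `σ ≤ 1/2` (avoiding the poles of `Γ`), the function
`τ ↦ |Γ(1-σ-iτ)|²/|Γ(σ+iτ)|²` is nondecreasing on `[0, ∞)`. -/
theorem monotoneOn_abs_Gamma_ratio (σ : ℝ) (hσ : σ ≤ 1 / 2) (hpole : ∀ n : ℕ, σ ≠ -(n : ℝ)) :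
    MonotoneOn
      (fun τ : ℝ =>
        ‖Complex.Gamma (1 - σ - τ * Complex.I)‖ ^ 2 /
          ‖Complex.Gamma (σ + τ * Complex.I)‖ ^ 2)
      (Set.Ici 0) := by
  -- Rewrite everything via `normSq`.
  have habs : ∀ τ : ℝ,
      ‖Complex.Gamma (1 - σ - τ * Complex.I)‖ ^ 2 /
          ‖Complex.Gamma (σ + τ * Complex.I)‖ ^ 2 =
        Complex.normSq (Complex.Gamma (((1 - σ : ℝ) : ℂ) + τ * Complex.I)) /
          Complex.normSq (Complex.Gamma ((σ : ℂ) + τ * Complex.I)) := by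
    intro τ
    rw [Complex.sq_norm, Complex.sq_norm]
    congr 1
    have h : (1 - (σ : ℂ) - τ * Complex.I) =
        (starRingEnd ℂ) (((1 - σ : ℝ) : ℂ) + τ * Complex.I) := by
      simp only [map_add, map_mul, Complex.conj_I, Complex.conj_ofReal]
      push_cast; ring
    rw [h, Complex.Gamma_conj, Complex.normSq_conj]
  -- Nonvanishing of the denominator Gamma.
  have hΓ : ∀ τ : ℝ, Complex.Gamma ((σ : ℂ) + τ * Complex.I) ≠ 0 := by
    intro τ
    apply Complex.Gamma_ne_zero
    intro m h
    have him : τ = 0 := by simpa using congrArg Complex.im h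
    have hre : σ = -(m : ℝ) := by simpa [him] using congrArg Complex.re h
    exact hpole m hre
  intro τ₁ h1 τ₂ h2 h12
  simp only [Set.mem_Ici] at h1 h2
  simp only [habs]
  -- The approximating sequences.
  set F : ℝ → ℕ → ℝ := fun τ n =>
    Complex.normSq (Complex.GammaSeq (((1 - σ : ℝ) : ℂ) + τ * Complex.I) n) /
      Complex.normSq (Complex.GammaSeq ((σ : ℂ) + τ * Complex.I) n) with hF
  have htend : ∀ τ : ℝ, Tendsto (F τ) atTop
      (nhds (Complex.normSq (Complex.Gamma (((1 - σ : ℝ) : ℂ) + τ * Complex.I)) /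
        Complex.normSq (Complex.Gamma ((σ : ℂ) + τ * Complex.I)))) := by
    intro τ
    apply Tendsto.div
    · exact (Complex.continuous_normSq.tendsto _).comp
        (Complex.GammaSeq_tendsto_Gamma _)
    · exact (Complex.continuous_normSq.tendsto _).comp
        (Complex.GammaSeq_tendsto_Gamma _)
    · exact fun h => hΓ τ (Complex.normSq_eq_zero.mp h)
  -- For each `n ≥ 1`, the ratio at `τ₁` is at most the ratio at `τ₂`.
  have hstep : ∀ n : ℕ, 1 ≤ n → F τ₁ n ≤ F τ₂ n := by
    intro n hn
    have hform : ∀ τ : ℝ, F τ n =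
        ((n : ℝ) ^ (1 - σ) * n.factorial) ^ 2 / ((n : ℝ) ^ σ * n.factorial) ^ 2 *
          ∏ j ∈ Finset.range (n + 1), (((σ + j) ^ 2 + τ ^ 2) / ((1 - σ + j) ^ 2 + τ ^ 2)) := by
      intro τ
      rw [hF]
      simp only
      rw [normSq_GammaSeq_aux (1 - σ) τ n hn, normSq_GammaSeq_aux σ τ n hn,
        div_div_div_comm, ← Finset.prod_div_distrib]
      rw [div_eq_mul_inv, ← Finset.prod_inv_distrib]
      congr 1
      refine Finset.prod_congr rfl fun j _ => ?_
      rw [inv_div]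
    rw [hform τ₁, hform τ₂]
    apply mul_le_mul_of_nonneg_left _ (by positivity)
    apply Finset.prod_le_prod
    · intro j _
      positivity
    · intro j _
      exact factor_mono hσ j h1 h12
  refine le_of_tendsto_of_tendsto (htend τ₁) (htend τ₂) ?_
  filter_upwards [eventually_ge_atTop 1] with n hn
  exact hstep n hn
end
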